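/- Let n ≥ 2 and let Γ be a countable subgroup of GL_n(ℂ), acting on the complex projective space ℂP^{n-1} (the projectivization of ℂⁿ) by the projective transformations induced by the linear action on ℂⁿ. Then for every homeomorphism f of ℂP^{n-1} satisfying f(p) ∈ Γ·p for all p ∈ ℂP^{n-1}, there exists γ ∈ Γ such that f(p) = γ·p for all p ∈ ℂP^{n-1}. -/

import Mathlib

open scoped LinearAlgebra.Projectivization

/-- The quotient topology on a projective space: `ℙ K V` is the quotient of `V \ {0}`
(with the subspace topology) by the proportionality relation. -/
noncomputable instance projectivizationTopology (K V : Type*) [DivisionRing K]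
    [AddCommGroup V] [Module K V] [TopologicalSpace V] :
    TopologicalSpace (Projectivization K V) :=
  inferInstanceAs (TopologicalSpace (Quotient (projectivizationSetoid K V)))

/-- An invertible matrix `γ ∈ GL_n(ℂ)` acts on `ℂP^{n-1}`, sending the line through
`v ≠ 0` to the line through `γv`. -/
noncomputable def projAct {n : ℕ} (γ : Matrix.GeneralLinearGroup (Fin n) ℂ)
    (p : ℙ ℂ (Fin n → ℂ)) : ℙ ℂ (Fin n → ℂ) :=
  Projectivization.map ((γ : Matrix (Fin n) (Fin n) ℂ).mulVecLin)
    (Function.LeftInverse.injective (g := ((γ⁻¹ : Matrix.GeneralLinearGroup (Fin n) ℂ) :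
        Matrix (Fin n) (Fin n) ℂ).mulVecLin) (fun v => by
      have h : ((γ⁻¹ : Matrix.GeneralLinearGroup (Fin n) ℂ) : Matrix (Fin n) (Fin n) ℂ) *
          (γ : Matrix (Fin n) (Fin n) ℂ) = 1 := Units.inv_mul γ
      simp only [Matrix.mulVecLin_apply, Matrix.mulVec_mulVec, h, Matrix.one_mulVec])) p


namespace Stmt8Aux

open Projectivization Set Matrix Topology Complex
variable {n : ℕ}

lemma isQuotientMap_mk' :
    IsQuotientMap (Projectivization.mk' ℂ :
      {v : Fin n → ℂ // v ≠ 0} → ℙ ℂ (Fin n → ℂ)) :=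
  isQuotientMap_quot_mk

lemma continuous_mk' :
    Continuous (Projectivization.mk' ℂ :
      {v : Fin n → ℂ // v ≠ 0} → ℙ ℂ (Fin n → ℂ)) :=
  isQuotientMap_mk'.continuous

lemma mulVec_ne_zero (γ : Matrix.GeneralLinearGroup (Fin n) ℂ) {v : Fin n → ℂ} (hv : v ≠ 0) :
    (γ : Matrix (Fin n) (Fin n) ℂ).mulVec v ≠ 0 := by
  intro h
  apply hv
  have h2 := congrArg (fun w => ((γ⁻¹ : Matrix.GeneralLinearGroup (Fin n) ℂ) :
      Matrix (Fin n) (Fin n) ℂ).mulVec w) h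
  have hinv : ((γ⁻¹ : Matrix.GeneralLinearGroup (Fin n) ℂ) : Matrix (Fin n) (Fin n) ℂ) *
      (γ : Matrix (Fin n) (Fin n) ℂ) = 1 := Units.inv_mul γ
  have h3 : v = ((γ⁻¹ : Matrix.GeneralLinearGroup (Fin n) ℂ) : Matrix (Fin n) (Fin n) ℂ) *ᵥ
      ((γ : Matrix (Fin n) (Fin n) ℂ) *ᵥ v) := by
    rw [Matrix.mulVec_mulVec, hinv, Matrix.one_mulVec]
  rw [h3, h, Matrix.mulVec_zero]

lemma projAct_mk (γ : Matrix.GeneralLinearGroup (Fin n) ℂ) (v : Fin n → ℂ) (hv : v ≠ 0) :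
    projAct γ (Projectivization.mk ℂ v hv) =
      Projectivization.mk ℂ ((γ : Matrix (Fin n) (Fin n) ℂ).mulVec v) (mulVec_ne_zero γ hv) := by
  unfold projAct
  rw [Projectivization.map_mk]
  simp only [Matrix.mulVecLin_apply]

lemma continuous_projAct (γ : Matrix.GeneralLinearGroup (Fin n) ℂ) :
    Continuous (projAct γ : ℙ ℂ (Fin n → ℂ) → ℙ ℂ (Fin n → ℂ)) := by
  rw [isQuotientMap_mk'.continuous_iff]
  have hkey : (projAct γ) ∘ (Projectivization.mk' ℂ) =
      fun u : {v : Fin n → ℂ // v ≠ 0} =>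
        Projectivization.mk' ℂ ⟨(γ : Matrix (Fin n) (Fin n) ℂ).mulVec u.1,
          mulVec_ne_zero γ u.2⟩ := by
    funext u
    simp only [Function.comp_apply, Projectivization.mk'_eq_mk]
    exact projAct_mk γ u.1 u.2
  rw [hkey]
  exact continuous_mk'.comp
    ((Continuous.matrix_mulVec continuous_const continuous_subtype_val).subtype_mk _)


lemma denom_ne_zero (v : Fin n → ℂ) (hv : v ≠ 0) :
    (∑ t, v t * (starRingEnd ℂ) (v t)) ≠ 0 := by
  have h1 : (∑ t, v t * (starRingEnd ℂ) (v t)) = ((∑ t, Complex.normSq (v t) : ℝ) : ℂ) := by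
    push_cast
    exact Finset.sum_congr rfl fun t _ => (Complex.mul_conj (v t))
  rw [h1]
  rw [Complex.ofReal_ne_zero]
  obtain ⟨i, hi⟩ := Function.ne_iff.mp hv
  have : 0 < ∑ t, Complex.normSq (v t) := by
    apply Finset.sum_pos' (fun t _ => Complex.normSq_nonneg _)
    exact ⟨i, Finset.mem_univ i, Complex.normSq_pos.mpr hi⟩
  exact ne_of_gt this

/-- The "projection matrix" function separating points of projective space. -/
noncomputable def Phi : ℙ ℂ (Fin n → ℂ) → (Fin n → Fin n → ℂ) :=
  Projectivization.lift
    (fun u : {v : Fin n → ℂ // v ≠ 0} =>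
      fun i j => u.1 i * (starRingEnd ℂ) (u.1 j) / (∑ t, u.1 t * (starRingEnd ℂ) (u.1 t)))
    (by
      rintro ⟨a, ha⟩ ⟨b, hb⟩ t (h : a = t • b)
      have ht : t ≠ 0 := by
        rintro rfl
        simp at h
        exact ha h
      funext i j
      have hb' := denom_ne_zero b hb
      have htc : t * (starRingEnd ℂ) t ≠ 0 := mul_ne_zero ht (by simpa using ht)
      have hnum : a i * (starRingEnd ℂ) (a j) =
          (t * (starRingEnd ℂ) t) * (b i * (starRingEnd ℂ) (b j)) := by
        rw [h]
        simp only [Pi.smul_apply, smul_eq_mul, _root_.map_mul]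
        ring
      have hden : (∑ s, a s * (starRingEnd ℂ) (a s)) =
          (t * (starRingEnd ℂ) t) * (∑ s, b s * (starRingEnd ℂ) (b s)) := by
        rw [h, Finset.mul_sum]
        refine Finset.sum_congr rfl fun s _ => ?_
        simp only [Pi.smul_apply, smul_eq_mul, _root_.map_mul]
        ring
      simp only [hnum, hden]
      rw [mul_div_mul_left _ _ htc])

lemma Phi_mk (v : Fin n → ℂ) (hv : v ≠ 0) :
    Phi (Projectivization.mk ℂ v hv) =
      fun i j => v i * (starRingEnd ℂ) (v j) / (∑ t, v t * (starRingEnd ℂ) (v t)) :=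
  rfl

lemma Phi_injective : Function.Injective (Phi : ℙ ℂ (Fin n → ℂ) → (Fin n → Fin n → ℂ)) := by
  intro p q h
  induction p using Projectivization.ind with
  | h v hv =>
  induction q using Projectivization.ind with
  | h w hw =>
  rw [Phi_mk, Phi_mk] at h
  have hDv := denom_ne_zero v hv
  have hDw := denom_ne_zero w hw
  have hsum : ∀ (u : Fin n → ℂ), (∑ t, u t * (starRingEnd ℂ) (u t)) ≠ 0 → ∀ i,
      ∑ j, (u i * (starRingEnd ℂ) (u j) / (∑ t, u t * (starRingEnd ℂ) (u t))) * u j = u i := by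
    intro u hu i
    have e1 : ∑ j, (u i * (starRingEnd ℂ) (u j) / (∑ t, u t * (starRingEnd ℂ) (u t))) * u j
        = (∑ j, u i * (u j * (starRingEnd ℂ) (u j))) / (∑ t, u t * (starRingEnd ℂ) (u t)) := by
      rw [Finset.sum_div]
      exact Finset.sum_congr rfl fun j _ => by ring
    rw [e1, ← Finset.mul_sum, mul_div_assoc, div_self hu, mul_one]
  have key : ∀ i, v i = ((∑ j, (starRingEnd ℂ) (w j) * v j) / (∑ t, w t * (starRingEnd ℂ) (w t))) * w i := by
    intro i
    have e2 : ((∑ j, (starRingEnd ℂ) (w j) * v j) / (∑ t, w t * (starRingEnd ℂ) (w t))) * w i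
        = ∑ j, (w i * (starRingEnd ℂ) (w j) / (∑ t, w t * (starRingEnd ℂ) (w t))) * v j := by
      rw [div_mul_eq_mul_div, Finset.sum_mul, Finset.sum_div]
      exact Finset.sum_congr rfl fun j _ => by ring
    have e3 : ∑ j, (w i * (starRingEnd ℂ) (w j) / (∑ t, w t * (starRingEnd ℂ) (w t))) * v j
        = ∑ j, (v i * (starRingEnd ℂ) (v j) / (∑ t, v t * (starRingEnd ℂ) (v t))) * v j := by
      refine Finset.sum_congr rfl fun j _ => ?_
      rw [congrFun (congrFun h i) j]
    rw [e2, e3, hsum v hDv i]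
  rw [Projectivization.mk_eq_mk_iff']
  exact ⟨_, funext fun i => (key i).symm⟩

lemma continuous_Phi : Continuous (Phi : ℙ ℂ (Fin n → ℂ) → (Fin n → Fin n → ℂ)) := by
  rw [isQuotientMap_mk'.continuous_iff]
  apply continuous_pi
  intro i
  apply continuous_pi
  intro j
  apply Continuous.div
  · exact ((continuous_apply i).comp continuous_subtype_val).mul
      (Complex.continuous_conj.comp ((continuous_apply j).comp continuous_subtype_val))
  · exact continuous_finset_sum _ fun t _ =>
      ((continuous_apply t).comp continuous_subtype_val).mul
        (Complex.continuous_conj.comp ((continuous_apply t).comp continuous_subtype_val))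
  · exact fun u => denom_ne_zero u.1 u.2

instance : T2Space (ℙ ℂ (Fin n → ℂ)) := by
  constructor
  intro p q hpq
  obtain ⟨U, W, hU, hW, hpU, hqW, hUW⟩ := t2_separation (Phi_injective.ne hpq)
  exact ⟨Phi ⁻¹' U, Phi ⁻¹' W, hU.preimage continuous_Phi, hW.preimage continuous_Phi,
    hpU, hqW, hUW.preimage Phi⟩

instance : CompactSpace (ℙ ℂ (Fin n → ℂ)) := by
  constructor
  have hcomp : IsCompact (Metric.sphere (0 : Fin n → ℂ) 1) := isCompact_sphere 0 1
  haveI := isCompact_iff_compactSpace.mp hcomp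
  have hne : ∀ s : Metric.sphere (0 : Fin n → ℂ) 1, (s : Fin n → ℂ) ≠ 0 := by
    rintro ⟨s, hs⟩ rfl
    simp at hs
  let g : Metric.sphere (0 : Fin n → ℂ) 1 → ℙ ℂ (Fin n → ℂ) :=
    fun s => Projectivization.mk' ℂ ⟨s.1, hne s⟩
  have hgc : Continuous g :=
    continuous_mk'.comp (continuous_subtype_val.subtype_mk _)
  have huniv : (Set.univ : Set (ℙ ℂ (Fin n → ℂ))) = Set.range g := by
    ext p
    simp only [Set.mem_univ, true_iff]
    induction p using Projectivization.ind with
    | h v hv =>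
    have hnv : ‖v‖ ≠ 0 := norm_ne_zero_iff.mpr hv
    have hmem : ((‖v‖ : ℂ))⁻¹ • v ∈ Metric.sphere (0 : Fin n → ℂ) 1 := by
      simp only [Metric.mem_sphere, dist_zero_right, norm_smul]
      rw [norm_inv]
      simp [hnv]
    refine ⟨⟨((‖v‖ : ℂ))⁻¹ • v, hmem⟩, ?_⟩
    show Projectivization.mk ℂ _ _ = _
    rw [Projectivization.mk_eq_mk_iff']
    exact ⟨((‖v‖ : ℂ))⁻¹, rfl⟩
  rw [huniv]
  exact isCompact_range hgc

example : LocallyCompactSpace (ℙ ℂ (Fin n → ℂ)) := inferInstance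
example : BaireSpace (ℙ ℂ (Fin n → ℂ)) := inferInstance
example [Nontrivial (Fin n → ℂ)] : Nonempty (ℙ ℂ (Fin n → ℂ)) := inferInstance



variable {n : ℕ}

lemma exists_smul_of_minors (x y : Fin n → ℂ) (hy : y ≠ 0)
    (h : ∀ k l, x k * y l = x l * y k) : ∃ c : ℂ, x = c • y := by
  obtain ⟨l₀, hl₀⟩ := Function.ne_iff.mp hy
  refine ⟨x l₀ / y l₀, funext fun k => ?_⟩
  simp only [Pi.smul_apply, smul_eq_mul]
  rw [div_mul_eq_mul_div, eq_div_iff hl₀]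
  exact h k l₀

lemma agree_iff (a b : Matrix.GeneralLinearGroup (Fin n) ℂ) (v : Fin n → ℂ) (hv : v ≠ 0) :
    projAct a (Projectivization.mk ℂ v hv) = projAct b (Projectivization.mk ℂ v hv) ↔
      ∀ k l, ((a : Matrix (Fin n) (Fin n) ℂ).mulVec v) k *
          ((b : Matrix (Fin n) (Fin n) ℂ).mulVec v) l
        = ((a : Matrix (Fin n) (Fin n) ℂ).mulVec v) l *
          ((b : Matrix (Fin n) (Fin n) ℂ).mulVec v) k := by
  rw [projAct_mk, projAct_mk, Projectivization.mk_eq_mk_iff']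
  constructor
  · rintro ⟨c, hc⟩ k l
    rw [← hc]
    simp only [Pi.smul_apply, smul_eq_mul]
    ring
  · intro h
    obtain ⟨c, hc⟩ := exists_smul_of_minors _ _ (mulVec_ne_zero b hv) h
    exact ⟨c, hc.symm⟩

lemma exists_ball_subset {O : Set (ℙ ℂ (Fin n → ℂ))} (hO : IsOpen O) {p : ℙ ℂ (Fin n → ℂ)}
    (hp : p ∈ O) :
    ∃ (u₀ : Fin n → ℂ) (hu₀ : u₀ ≠ 0) (ε : ℝ), 0 < ε ∧ Projectivization.mk ℂ u₀ hu₀ = p ∧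
      ∀ (u : Fin n → ℂ) (hu : u ≠ 0), dist u u₀ < ε → Projectivization.mk ℂ u hu ∈ O := by
  have hpre : IsOpen ((Projectivization.mk' ℂ) ⁻¹' O : Set {v : Fin n → ℂ // v ≠ 0}) :=
    hO.preimage continuous_mk'
  rw [isOpen_induced_iff] at hpre
  obtain ⟨S', hS', hpre_eq⟩ := hpre
  have hmem : p.rep ∈ S' := by
    have : (⟨p.rep, p.rep_nonzero⟩ : {v : Fin n → ℂ // v ≠ 0}) ∈
        (Projectivization.mk' ℂ) ⁻¹' O := by
      show Projectivization.mk' ℂ _ ∈ O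
      rw [Projectivization.mk'_eq_mk]
      rw [Projectivization.mk_rep]
      exact hp
    rw [← hpre_eq] at this
    exact this
  have hS'' : IsOpen (S' ∩ {v : Fin n → ℂ | v ≠ 0}) := by
    refine hS'.inter ?_
    have : {v : Fin n → ℂ | v ≠ 0} = ({0}ᶜ : Set (Fin n → ℂ)) := by ext; simp
    rw [this]
    exact isOpen_compl_singleton
  obtain ⟨ε, hε, hball⟩ := Metric.isOpen_iff.mp hS'' p.rep ⟨hmem, p.rep_nonzero⟩
  refine ⟨p.rep, p.rep_nonzero, ε, hε, Projectivization.mk_rep p, ?_⟩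
  intro u hu hd
  have : u ∈ S' ∩ {v | v ≠ 0} := hball (by rwa [Metric.mem_ball])
  have h2 : (⟨u, hu⟩ : {v : Fin n → ℂ // v ≠ 0}) ∈ (Projectivization.mk' ℂ) ⁻¹' O := by
    rw [← hpre_eq]
    exact this.1
  rw [Set.mem_preimage, Projectivization.mk'_eq_mk] at h2
  exact h2

lemma projAct_eq_of_interior (a b : Matrix.GeneralLinearGroup (Fin n) ℂ)
    (h : (interior {p : ℙ ℂ (Fin n → ℂ) | projAct a p = projAct b p}).Nonempty) :
    projAct a = projAct b := by
  obtain ⟨p₀, hp₀⟩ := h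
  obtain ⟨u₀, hu₀, ε, hε, hmk, hball⟩ := exists_ball_subset isOpen_interior hp₀
  set A := (a : Matrix (Fin n) (Fin n) ℂ) with hA
  set B := (b : Matrix (Fin n) (Fin n) ℂ) with hB
  have hmin : ∀ (u : Fin n → ℂ) (hu : u ≠ 0), dist u u₀ < ε →
      ∀ k l, (A.mulVec u) k * (B.mulVec u) l = (A.mulVec u) l * (B.mulVec u) k := by
    intro u hu hd k l
    have h2 : Projectivization.mk ℂ u hu ∈ {p : ℙ ℂ (Fin n → ℂ) | projAct a p = projAct b p} :=
      interior_subset (hball u hu hd)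
    exact (agree_iff a b u hu).mp h2 k l
  have hall : ∀ (u : Fin n → ℂ) k l,
      (A.mulVec u) k * (B.mulVec u) l = (A.mulVec u) l * (B.mulVec u) k := by
    intro u k l
    by_cases hu0 : u = 0
    · subst hu0; simp [Matrix.mulVec_zero]
    set r : ℝ := ε / (2 * (‖u‖ + 1)) with hr
    have hupos : (0:ℝ) < ‖u‖ + 1 := by positivity
    have hrpos : 0 < r := by positivity
    -- valid z's give minor equations
    have hkey : ∀ z : ℂ, ‖z‖ ≤ r → u₀ + z • u ≠ 0 →
        ((A.mulVec u₀) k + z * (A.mulVec u) k) * ((B.mulVec u₀) l + z * (B.mulVec u) l)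
          = ((A.mulVec u₀) l + z * (A.mulVec u) l) * ((B.mulVec u₀) k + z * (B.mulVec u) k) := by
      intro z hz hnz
      have hdist : dist (u₀ + z • u) u₀ < ε := by
        rw [dist_eq_norm, add_sub_cancel_left, norm_smul]
        have h1 : ‖z‖ * ‖u‖ ≤ r * ‖u‖ := mul_le_mul_of_nonneg_right hz (norm_nonneg u)
        have h2 : r * ‖u‖ < ε := by
          rw [hr, div_mul_eq_mul_div, div_lt_iff₀ (by positivity)]
          nlinarith [norm_nonneg u]
        linarith
      have := hmin (u₀ + z • u) hnz hdist k l
      simpa [Matrix.mulVec_add, Matrix.mulVec_smul, Pi.add_apply, Pi.smul_apply,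
        smul_eq_mul] using this
    -- pick two good distinct nonzero z's
    have huz : ∀ z₁ z₂ : ℂ, z₁ ≠ z₂ → u₀ + z₁ • u = 0 → u₀ + z₂ • u ≠ 0 := by
      intro z₁ z₂ hne h1 h2
      apply hu0
      have h4 : z₁ • u - z₂ • u = 0 := by
        have h5 : (u₀ + z₁ • u) - (u₀ + z₂ • u) = z₁ • u - z₂ • u := by abel
        rw [h1, h2] at h5
        simpa using h5.symm
      have h3 : (z₁ - z₂) • u = 0 := by rw [sub_smul]; exact h4
      rcases smul_eq_zero.mp h3 with h | h
      · exact absurd (sub_eq_zero.mp h) hne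
      · exact h
    obtain ⟨z₁, z₂, hz12, hz1n, hz2n, hz1r, hz2r, hg1, hg2⟩ :
        ∃ z₁ z₂ : ℂ, z₁ ≠ z₂ ∧ z₁ ≠ 0 ∧ z₂ ≠ 0 ∧ ‖z₁‖ ≤ r ∧ ‖z₂‖ ≤ r ∧
          u₀ + z₁ • u ≠ 0 ∧ u₀ + z₂ • u ≠ 0 := by
      have hnorm : ∀ t : ℝ, |t| ≤ r → ‖((t : ℝ) : ℂ)‖ ≤ r := fun t ht => by
        rw [Complex.norm_real]; exact ht
      have habs1 : |r| ≤ r := le_of_eq (abs_of_pos hrpos)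
      have habs2 : |r/2| ≤ r := by rw [abs_of_pos (by positivity)]; linarith
      have habs3 : |(-r)| ≤ r := by rw [abs_neg]; exact habs1
      have hcne : ∀ s t : ℝ, s ≠ t → ((s : ℝ) : ℂ) ≠ ((t : ℝ) : ℂ) := fun s t h hc =>
        h (by exact_mod_cast hc)
      by_cases hb1 : u₀ + ((r : ℝ) : ℂ) • u = 0
      · exact ⟨((-r : ℝ) : ℂ), ((r/2 : ℝ) : ℂ), hcne _ _ (by linarith),
          Complex.ofReal_ne_zero.mpr (by linarith), Complex.ofReal_ne_zero.mpr (by positivity),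
          hnorm _ habs3, hnorm _ habs2,
          huz _ _ (hcne _ _ (by linarith)) hb1, huz _ _ (hcne _ _ (by linarith)) hb1⟩
      · by_cases hb2 : u₀ + ((-r : ℝ) : ℂ) • u = 0
        · exact ⟨((r : ℝ) : ℂ), ((r/2 : ℝ) : ℂ), hcne _ _ (by linarith),
            Complex.ofReal_ne_zero.mpr (by linarith), Complex.ofReal_ne_zero.mpr (by positivity),
            hnorm _ habs1, hnorm _ habs2,
            hb1, huz _ _ (hcne _ _ (by linarith)) hb2⟩
        · exact ⟨((r : ℝ) : ℂ), ((-r : ℝ) : ℂ), hcne _ _ (by linarith),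
            Complex.ofReal_ne_zero.mpr (by linarith), Complex.ofReal_ne_zero.mpr (by linarith),
            hnorm _ habs1, hnorm _ habs3, hb1, hb2⟩
    have e0 := hmin u₀ hu₀ (by simpa using hε) k l
    have e1 := hkey z₁ hz1r hg1
    have e2 := hkey z₂ hz2r hg2
    have hfac : z₁ * z₂ * (z₁ - z₂) *
        ((A.mulVec u) k * (B.mulVec u) l - (A.mulVec u) l * (B.mulVec u) k) = 0 := by
      linear_combination z₂ * e1 - z₁ * e2 - (z₂ - z₁) * e0
    have hz0 : z₁ * z₂ * (z₁ - z₂) ≠ 0 :=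
      mul_ne_zero (mul_ne_zero hz1n hz2n) (sub_ne_zero.mpr hz12)
    have hsub := (mul_eq_zero.mp hfac).resolve_left hz0
    exact sub_eq_zero.mp hsub
  funext p
  induction p using Projectivization.ind with
  | h v hv =>
  exact (agree_iff a b v hv).mpr (fun k l => hall v k l)

lemma exists_two_points (hn : 2 ≤ n) {O : Set (ℙ ℂ (Fin n → ℂ))} (hO : IsOpen O)
    (hne : O.Nonempty) : ∃ p q : ℙ ℂ (Fin n → ℂ), p ∈ O ∧ q ∈ O ∧ p ≠ q := by
  obtain ⟨p, hp⟩ := hne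
  obtain ⟨u₀, hu₀, ε, hε, hmk, hball⟩ := exists_ball_subset hO hp
  obtain ⟨i, hi⟩ := Function.ne_iff.mp hu₀
  have h2 : ∃ j : Fin n, j ≠ i := by
    by_cases h : i = ⟨0, by omega⟩
    · exact ⟨⟨1, by omega⟩, by rw [h]; intro hc; exact absurd (congrArg Fin.val hc) (by norm_num)⟩
    · exact ⟨⟨0, by omega⟩, fun hc => h hc.symm⟩
  obtain ⟨j, hj⟩ := h2
  classical
  set u₂ : Fin n → ℂ := Function.update u₀ j (u₀ j + ((ε/2 : ℝ) : ℂ)) with hu₂def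
  have hu₂i : u₂ i = u₀ i := Function.update_of_ne (fun hc => hj hc.symm) _ _
  have hu₂j : u₂ j = u₀ j + ((ε/2 : ℝ) : ℂ) := Function.update_self _ _ _
  have hu₂ : u₂ ≠ 0 := fun hc => hi (by rw [← hu₂i, hc])
  have hd : dist u₂ u₀ < ε := by
    rw [dist_pi_lt_iff hε]
    intro b
    by_cases hb : b = j
    · subst hb
      rw [dist_eq_norm]
      have hsub : u₂ b - u₀ b = ((ε/2 : ℝ) : ℂ) := by rw [hu₂j]; ring
      rw [hsub]
      have : ‖((ε/2 : ℝ) : ℂ)‖ = |ε/2| := Complex.norm_real _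
      rw [this, abs_of_pos (by positivity)]
      linarith
    · rw [hu₂def, Function.update_of_ne hb]
      simpa using hε
  refine ⟨p, Projectivization.mk ℂ u₂ hu₂, hp, hball u₂ hu₂ hd, fun hc => ?_⟩
  rw [← hmk, Projectivization.mk_eq_mk_iff'] at hc
  obtain ⟨c, hcc⟩ := hc
  have h1 : c * u₀ i = u₀ i := by
    have := congrFun hcc i
    simpa [Pi.smul_apply, smul_eq_mul, hu₂i] using this
  have hc1 : c = 1 := mul_right_cancel₀ hi (by rw [one_mul]; exact h1)
  have h2 : c * (u₀ j + ((ε/2 : ℝ) : ℂ)) = u₀ j := by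
    have := congrFun hcc j
    simpa [Pi.smul_apply, smul_eq_mul, hu₂j] using this
  rw [hc1, one_mul] at h2
  have h3 : ((ε/2 : ℝ) : ℂ) = 0 := by linear_combination h2
  rw [Complex.ofReal_eq_zero] at h3
  linarith

end Stmt8Aux

open Set Topology in
-- generic Baire piece lemma
lemma baire_piece {X : Type*} [TopologicalSpace X] [T2Space X] [LocallyCompactSpace X]
    {U : Set X} (hU : IsOpen U) (hne : U.Nonempty) {ι : Type*} [Countable ι]
    (D : ι → Set X) (hD : ∀ i, IsClosed (D i)) (hcov : U ⊆ ⋃ i, D i) :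
    ∃ i V, IsOpen V ∧ V.Nonempty ∧ V ⊆ U ∧ V ⊆ D i := by
  haveI : Nonempty ↥U := hne.to_subtype
  haveI : LocallyCompactSpace ↥U := hU.isOpenEmbedding_subtypeVal.locallyCompactSpace
  obtain ⟨i, hint⟩ := nonempty_interior_of_iUnion_of_closed
    (f := fun i => (Subtype.val ⁻¹' D i : Set ↥U))
    (fun i => (hD i).preimage continuous_subtype_val)
    (by
      ext x
      simp only [Set.mem_iUnion, Set.mem_univ, iff_true, Set.mem_preimage]
      exact Set.mem_iUnion.mp (hcov x.2))
  obtain ⟨x, hx⟩ := hint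
  rw [mem_interior_iff_mem_nhds, mem_nhds_subtype] at hx
  obtain ⟨t, ht, hsub⟩ := hx
  refine ⟨i, interior t ∩ U, isOpen_interior.inter hU,
    ⟨x.1, mem_interior_iff_mem_nhds.mpr ht, x.2⟩, Set.inter_subset_right, ?_⟩
  rintro y ⟨hyt, hyU⟩
  exact hsub (show ((⟨y, hyU⟩ : ↥U) : X) ∈ t from interior_subset hyt)

open Set Topology
-- Sierpinski-type lemma on ℝ
lemma sier {ι : Type*} [Countable ι] (F : ι → Set ℝ) (hcl : ∀ i, IsClosed (F i))
    (hcov : ∀ t : ℝ, ∃ i, t ∈ F i)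
    (hdis : ∀ i j, F i = F j ∨ F i ∩ F j = ∅)
    {i j : ι} (hi : (F i).Nonempty) (hj : (F j).Nonempty) : F i = F j := by
  by_contra hne
  have hdisj : F i ∩ F j = ∅ := (hdis i j).resolve_left hne
  set K : Set ℝ := {x | ∀ m, x ∉ interior (F m)} with hKdef
  have hKcl : IsClosed K := by
    have : K = ⋂ m, (interior (F m))ᶜ := by
      ext x; simp [hKdef]
    rw [this]
    exact isClosed_iInter fun m => isClosed_compl_iff.2 isOpen_interior
  have hKne : K.Nonempty := by
    by_contra hKe
    rw [Set.not_nonempty_iff_eq_empty] at hKe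
    have hopen : IsOpen (F i) := by
      rw [isOpen_iff_mem_nhds]
      intro x hx
      have hxK : x ∉ K := by rw [hKe]; exact Set.notMem_empty x
      simp only [hKdef, Set.mem_setOf_eq, not_forall, not_not] at hxK
      obtain ⟨m, hm⟩ := hxK
      have hmi : F m = F i := by
        refine (hdis m i).resolve_right fun hd => ?_
        have : x ∈ F m ∩ F i := ⟨interior_subset hm, hx⟩
        rw [hd] at this
        exact this
      rw [← hmi]
      exact mem_interior_iff_mem_nhds.mp (hmi ▸ (hmi ▸ hm))
    rcases isClopen_iff.mp ⟨hcl i, hopen⟩ with h0 | h1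
    · exact hi.ne_empty h0
    · obtain ⟨y, hy⟩ := hj
      have : y ∈ F i ∩ F j := ⟨h1 ▸ Set.mem_univ y, hy⟩
      rw [hdisj] at this
      exact this
  haveI : Nonempty ↥K := hKne.to_subtype
  haveI : CompleteSpace ↥K := hKcl.completeSpace_coe
  obtain ⟨m, hmint⟩ := nonempty_interior_of_iUnion_of_closed
    (f := fun m => (Subtype.val ⁻¹' F m : Set ↥K))
    (fun m => (hcl m).preimage continuous_subtype_val)
    (by
      ext x
      simp only [Set.mem_iUnion, Set.mem_univ, iff_true, Set.mem_preimage]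
      exact hcov x.1)
  obtain ⟨x, hx⟩ := hmint
  rw [mem_interior_iff_mem_nhds, mem_nhds_subtype] at hx
  obtain ⟨t, ht, hsub⟩ := hx
  obtain ⟨ε, hε, hball⟩ := Metric.mem_nhds_iff.mp ht
  have hKprop : ∀ y ∈ K, |y - ↑x| < ε → y ∈ F m := by
    intro y hy hlt
    have : (⟨y, hy⟩ : ↥K) ∈ Subtype.val ⁻¹' t := by
      apply hball
      simpa [Metric.mem_ball, Real.dist_eq] using hlt
    exact hsub this
  have hxFm : (x : ℝ) ∈ F m := hKprop x x.2 (by simpa using hε)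
  have hxnot : (x : ℝ) ∉ interior (F m) := x.2 m
  have hnotsub : ¬ (Metric.ball (x : ℝ) ε ⊆ F m) := by
    intro hsubm
    exact hxnot (mem_interior_iff_mem_nhds.mpr (Metric.mem_nhds_iff.mpr ⟨ε, hε, hsubm⟩))
  obtain ⟨y, hyball, hyFm⟩ := Set.not_subset.mp hnotsub
  obtain ⟨m', hym'⟩ := hcov y
  have hdisjm : F m' ∩ F m = ∅ := by
    refine (hdis m' m).resolve_left fun h => hyFm (h ▸ hym')
  have hyx : y ≠ (x : ℝ) := fun h => hyFm (h ▸ hxFm)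
  rw [Metric.mem_ball, Real.dist_eq] at hyball
  -- helper to close both branches
  have final : False := by
    rcases lt_or_gt_of_ne hyx with hlt | hgt
    · -- y < x, use sSup
      set S := F m' ∩ Icc y (x : ℝ) with hSdef
      have hSne : S.Nonempty := ⟨y, hym', le_refl y, le_of_lt hlt⟩
      have hScomp : IsCompact S := isCompact_Icc.inter_left (hcl m')
      set z := sSup S with hz
      have hzS : z ∈ S := hScomp.sSup_mem hSne
      have hzmax : ∀ w ∈ S, w ≤ z := fun w hw => le_csSup hScomp.bddAbove hw
      clear_value z
      have hzm' : z ∈ F m' := hzS.1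
      have hzx : z ≠ (x : ℝ) := by
        intro h
        have : (x : ℝ) ∈ F m' ∩ F m := ⟨h ▸ hzm', hxFm⟩
        rw [hdisjm] at this
        exact this
      have hzlt : z < (x : ℝ) := lt_of_le_of_ne hzS.2.2 hzx
      have hzK : z ∈ K := by
        intro m'' hzint
        have hzm'' : z ∈ F m'' := interior_subset hzint
        have heq : F m'' = F m' := by
          refine (hdis m'' m').resolve_right fun hd => ?_
          have : z ∈ F m'' ∩ F m' := ⟨hzm'', hzm'⟩
          rw [hd] at this
          exact this
        rw [heq] at hzint
        obtain ⟨δ, hδ, hbz⟩ := Metric.mem_nhds_iff.mp (mem_interior_iff_mem_nhds.mp hzint)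
        obtain ⟨w, hw⟩ : ∃ w, w = z + min (δ / 2) (((x : ℝ) - z) / 2) := ⟨_, rfl⟩
        have hmin : 0 < min (δ / 2) (((x : ℝ) - z) / 2) :=
          lt_min (by linarith) (by linarith)
        have hwS : w ∈ S := by
          constructor
          · apply hbz
            rw [Metric.mem_ball, Real.dist_eq]
            have : |w - z| = min (δ / 2) (((x : ℝ) - z) / 2) := by
              rw [hw]; rw [add_sub_cancel_left]; exact abs_of_pos hmin
            rw [this]
            exact lt_of_le_of_lt (min_le_left _ _) (by linarith)
          · constructor
            · have : y ≤ z := hzS.2.1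
              linarith
            · have : min (δ / 2) (((x : ℝ) - z) / 2) ≤ ((x : ℝ) - z) / 2 := min_le_right _ _
              rw [hw]
              linarith
        have : w ≤ z := hzmax w hwS
        linarith
      have hzd : |z - (x : ℝ)| < ε := by
        rw [abs_sub_lt_iff]
        constructor
        · linarith
        · have h1 : y ≤ z := hzS.2.1
          have h2 : (x : ℝ) - y ≤ |y - x| := by
            rw [abs_sub_comm]
            exact le_abs_self _
          linarith
      have : z ∈ F m := hKprop z hzK hzd
      have : z ∈ F m' ∩ F m := ⟨hzm', this⟩
      rw [hdisjm] at this
      exact this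
    · -- x < y, use sInf
      set S := F m' ∩ Icc (x : ℝ) y with hSdef
      have hSne : S.Nonempty := ⟨y, hym', le_of_lt hgt, le_refl y⟩
      have hScomp : IsCompact S := isCompact_Icc.inter_left (hcl m')
      set z := sInf S with hz
      have hzS : z ∈ S := hScomp.sInf_mem hSne
      have hzmin : ∀ w ∈ S, z ≤ w := fun w hw => csInf_le hScomp.bddBelow hw
      clear_value z
      have hzm' : z ∈ F m' := hzS.1
      have hzx : z ≠ (x : ℝ) := by
        intro h
        have : (x : ℝ) ∈ F m' ∩ F m := ⟨h ▸ hzm', hxFm⟩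
        rw [hdisjm] at this
        exact this
      have hzgt : (x : ℝ) < z := lt_of_le_of_ne hzS.2.1 (Ne.symm hzx)
      have hzK : z ∈ K := by
        intro m'' hzint
        have hzm'' : z ∈ F m'' := interior_subset hzint
        have heq : F m'' = F m' := by
          refine (hdis m'' m').resolve_right fun hd => ?_
          have : z ∈ F m'' ∩ F m' := ⟨hzm'', hzm'⟩
          rw [hd] at this
          exact this
        rw [heq] at hzint
        obtain ⟨δ, hδ, hbz⟩ := Metric.mem_nhds_iff.mp (mem_interior_iff_mem_nhds.mp hzint)
        obtain ⟨w, hw⟩ : ∃ w, w = z - min (δ / 2) ((z - (x : ℝ)) / 2) := ⟨_, rfl⟩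
        have hmin : 0 < min (δ / 2) ((z - (x : ℝ)) / 2) :=
          lt_min (by linarith) (by linarith)
        have hwS : w ∈ S := by
          constructor
          · apply hbz
            rw [Metric.mem_ball, Real.dist_eq]
            have : |w - z| = min (δ / 2) ((z - (x : ℝ)) / 2) := by
              rw [hw]
              rw [sub_sub_cancel_left]
              rw [abs_neg]
              exact abs_of_pos hmin
            rw [this]
            exact lt_of_le_of_lt (min_le_left _ _) (by linarith)
          · constructor
            · have : min (δ / 2) ((z - (x : ℝ)) / 2) ≤ (z - (x : ℝ)) / 2 := min_le_right _ _
              rw [hw]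
              linarith
            · have : z ≤ y := hzS.2.2
              linarith
        have : z ≤ w := hzmin w hwS
        linarith
      have hzd : |z - (x : ℝ)| < ε := by
        rw [abs_sub_lt_iff]
        constructor
        · have h1 : z ≤ y := hzS.2.2
          have h2 : y - (x : ℝ) ≤ |y - x| := le_abs_self _
          linarith
        · linarith
      have : z ∈ F m := hKprop z hzK hzd
      have : z ∈ F m' ∩ F m := ⟨hzm', this⟩
      rw [hdisjm] at this
      exact this
  exact final

open Set Topology Stmt8Aux in
set_option maxHeartbeats 2000000 in
/-- **Orbit rigidity on complex projective space.** Let `Γ` be a countable subgroup of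
`GL_n(ℂ)`, `n ≥ 2`, acting on `ℂP^{n-1}` by projective transformations. Then every
homeomorphism `f` of `ℂP^{n-1}` with `f(p) ∈ Γ · p` for all `p` is given by a single
element of `Γ`. -/
theorem stmt8 (n : ℕ) (hn : 2 ≤ n)
    (Γ : Subgroup (Matrix.GeneralLinearGroup (Fin n) ℂ)) (hΓ : Countable Γ)
    (f : ℙ ℂ (Fin n → ℂ) ≃ₜ ℙ ℂ (Fin n → ℂ))
    (hf : ∀ p : ℙ ℂ (Fin n → ℂ), ∃ γ ∈ Γ, f p = projAct γ p) :
    ∃ γ ∈ Γ, ∀ p : ℙ ℂ (Fin n → ℂ), f p = projAct γ p := by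
  classical
  haveI := hΓ
  haveI : Nonempty (Fin n) := ⟨⟨0, by omega⟩⟩
  set E : Γ → Set (ℙ ℂ (Fin n → ℂ)) := fun i => {p | f p = projAct ↑i p} with hE
  have hEcl : ∀ i : Γ, IsClosed (E i) :=
    fun i => isClosed_eq f.continuous (continuous_projAct (i : Matrix.GeneralLinearGroup (Fin n) ℂ))
  have hEcov : ∀ p : ℙ ℂ (Fin n → ℂ), ∃ i : Γ, p ∈ E i := by
    intro p
    obtain ⟨γ, hγ, hp⟩ := hf p
    exact ⟨⟨γ, hγ⟩, hp⟩
  obtain ⟨i₀, V₀, hV₀o, hV₀ne, -, hV₀E⟩ :=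
    baire_piece (isOpen_univ (X := ℙ ℂ (Fin n → ℂ))) univ_nonempty E hEcl
      (fun p _ => mem_iUnion.mpr (hEcov p))
  have hdense : ∀ U : Set (ℙ ℂ (Fin n → ℂ)), IsOpen U → U.Nonempty → (U ∩ E i₀).Nonempty := by
    intro U hUo hUne
    obtain ⟨i₁, V₁, hV₁o, hV₁ne, hV₁U, hV₁E⟩ :=
      baire_piece hUo hUne E hEcl (fun p _ => mem_iUnion.mpr (hEcov p))
    obtain ⟨x, hx⟩ := hV₁ne
    set v := x.rep with hvdef
    -- family of "bad" closed nowhere dense sets to avoid inside V₀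
    set Dfam : Option (Γ × Γ) → Set (ℙ ℂ (Fin n → ℂ)) := fun o =>
      Option.rec {x}
        (fun ab => if projAct (↑ab.1 : Matrix.GeneralLinearGroup (Fin n) ℂ) = projAct (↑ab.2)
          then ∅
          else {p | projAct (↑ab.1 : Matrix.GeneralLinearGroup (Fin n) ℂ) p = projAct (↑ab.2) p})
        o with hDfam
    have hDcl : ∀ o, IsClosed (Dfam o) := by
      rintro (_ | ab)
      · exact isClosed_singleton
      · show IsClosed (if projAct (↑ab.1 : Matrix.GeneralLinearGroup (Fin n) ℂ) = projAct (↑ab.2)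
          then ∅
          else {p | projAct (↑ab.1 : Matrix.GeneralLinearGroup (Fin n) ℂ) p = projAct (↑ab.2) p})
        split
        · exact isClosed_empty
        · exact isClosed_eq (continuous_projAct _) (continuous_projAct _)
    have hDint : ∀ o, interior (Dfam o) = ∅ := by
      rintro (_ | ab)
      · by_contra h
        obtain ⟨p1, p2, hp1, hp2, hp12⟩ :=
          exists_two_points hn isOpen_interior (nonempty_iff_ne_empty.mpr h)
        have e1 : p1 ∈ ({x} : Set (ℙ ℂ (Fin n → ℂ))) := interior_subset hp1
        have e2 : p2 ∈ ({x} : Set (ℙ ℂ (Fin n → ℂ))) := interior_subset hp2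
        rw [mem_singleton_iff] at e1 e2
        exact hp12 (e1.trans e2.symm)
      · show interior (if projAct (↑ab.1 : Matrix.GeneralLinearGroup (Fin n) ℂ) = projAct (↑ab.2)
          then ∅
          else {p | projAct (↑ab.1 : Matrix.GeneralLinearGroup (Fin n) ℂ) p = projAct (↑ab.2) p})
          = ∅
        split_ifs with heq
        · simp
        · by_contra h
          exact heq (projAct_eq_of_interior _ _ (nonempty_iff_ne_empty.mpr h))
    have hnotsub : ¬ (V₀ ⊆ ⋃ o, Dfam o) := by
      intro hsub
      obtain ⟨o, W, hWo, hWne, -, hWD⟩ := baire_piece hV₀o hV₀ne Dfam hDcl hsub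
      have h2 : (interior (Dfam o)).Nonempty := hWne.mono (interior_maximal hWD hWo)
      rw [hDint o] at h2
      exact h2.ne_empty rfl
    obtain ⟨y, hyV₀, hyD⟩ := not_subset.mp hnotsub
    set w := y.rep with hwdef
    have hyx : y ≠ x := by
      intro h
      exact hyD (mem_iUnion.mpr ⟨none, show y ∈ {x} from by rw [h]; exact rfl⟩)
    have hbad : ∀ a b : Γ, projAct (↑a : Matrix.GeneralLinearGroup (Fin n) ℂ) ≠ projAct ↑b →
        projAct (↑a) y ≠ projAct (↑b) y := by
      intro a b hne heq
      apply hyD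
      refine mem_iUnion.mpr ⟨some (a, b), ?_⟩
      show y ∈ (if projAct (↑a : Matrix.GeneralLinearGroup (Fin n) ℂ) = projAct (↑b) then ∅
        else {p | projAct (↑a : Matrix.GeneralLinearGroup (Fin n) ℂ) p = projAct (↑b) p})
      rw [if_neg hne]
      exact heq
    -- independence of v and w
    have hvw : ∀ α β : ℂ, α • v + β • w = 0 → α = 0 ∧ β = 0 := by
      intro α β h
      by_cases hβ : β = 0
      · subst hβ
        rw [zero_smul, add_zero] at h
        rcases smul_eq_zero.mp h with h' | h'
        · exact ⟨h', rfl⟩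
        · exact absurd h' x.rep_nonzero
      · exfalso
        apply hyx
        have h5 : β • w = (-α) • v := by
          rw [neg_smul, eq_neg_iff_add_eq_zero, add_comm]
          exact h
        have h7 : β • ((-α/β) • v) = (-α) • v := by
          rw [smul_smul]
          congr 1
          field_simp
        have h8 : w = (-α/β) • v := smul_right_injective _ hβ (h5.trans h7.symm)
        rw [← Projectivization.mk_rep y, ← Projectivization.mk_rep x]
        rw [Projectivization.mk_eq_mk_iff']
        exact ⟨-α/β, h8.symm⟩
    have hH0 : ∀ z : ℂ, (1 - z) • v + z • w ≠ 0 := by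
      intro z h
      obtain ⟨h1, h2⟩ := hvw (1 - z) z h
      rw [h2, sub_zero] at h1
      exact one_ne_zero h1
    set H : ℂ → ℙ ℂ (Fin n → ℂ) :=
      fun z => Projectivization.mk ℂ ((1 - z) • v + z • w) (hH0 z) with hHdef
    have hHcont : Continuous H := by
      have hrw : H = (Projectivization.mk' ℂ) ∘
          (fun z : ℂ => (⟨(1 - z) • v + z • w, hH0 z⟩ : {u : Fin n → ℂ // u ≠ 0})) := rfl
      rw [hrw]
      refine Stmt8Aux.continuous_mk'.comp (Continuous.subtype_mk ?_ _)
      exact ((continuous_const.sub continuous_id).smul continuous_const).add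
        (continuous_id.smul continuous_const)
    have hH0x : H 0 = x := by
      show Projectivization.mk ℂ _ _ = x
      conv_rhs => rw [← Projectivization.mk_rep x]
      rw [Projectivization.mk_eq_mk_iff']
      exact ⟨1, by simp [hvdef]⟩
    have hH1y : H 1 = y := by
      show Projectivization.mk ℂ _ _ = y
      conv_rhs => rw [← Projectivization.mk_rep y]
      rw [Projectivization.mk_eq_mk_iff']
      exact ⟨1, by simp [hwdef]⟩
    -- countable bad set in ℂ
    set Bset : Γ × Γ → Set ℂ := fun ab =>
      if projAct (↑ab.1 : Matrix.GeneralLinearGroup (Fin n) ℂ) = projAct (↑ab.2) then ∅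
      else {z | projAct (↑ab.1) (H z) = projAct (↑ab.2) (H z)} with hBset
    have hBfin : ∀ ab, (Bset ab).Finite := by
      rintro ⟨a, b⟩
      show Set.Finite (if projAct (↑a : Matrix.GeneralLinearGroup (Fin n) ℂ) = projAct (↑b) then ∅
        else {z | projAct (↑a) (H z) = projAct (↑b) (H z)})
      split
      case isTrue => exact finite_empty
      case isFalse hab =>
      have hbadw : projAct (↑a) y ≠ projAct (↑b) y := hbad a b hab
      have hnall : ¬ (∀ k l, (((↑a : Matrix.GeneralLinearGroup (Fin n) ℂ) :
            Matrix (Fin n) (Fin n) ℂ).mulVec w) k *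
            (((↑b : Matrix.GeneralLinearGroup (Fin n) ℂ) :
            Matrix (Fin n) (Fin n) ℂ).mulVec w) l
          = (((↑a : Matrix.GeneralLinearGroup (Fin n) ℂ) :
            Matrix (Fin n) (Fin n) ℂ).mulVec w) l *
            (((↑b : Matrix.GeneralLinearGroup (Fin n) ℂ) :
            Matrix (Fin n) (Fin n) ℂ).mulVec w) k) := by
        intro hall
        apply hbadw
        have hy : y = Projectivization.mk ℂ w y.rep_nonzero := (Projectivization.mk_rep y).symm
        rw [hy]
        exact (agree_iff _ _ w _).mpr hall
      push_neg at hnall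
      obtain ⟨k, l, hkl⟩ := hnall
      set A := ((↑a : Matrix.GeneralLinearGroup (Fin n) ℂ) : Matrix (Fin n) (Fin n) ℂ) with hA
      set B' := ((↑b : Matrix.GeneralLinearGroup (Fin n) ℂ) : Matrix (Fin n) (Fin n) ℂ) with hB'
      set pq : Polynomial ℂ :=
        ((1 - Polynomial.X) * Polynomial.C ((A.mulVec v) k) +
          Polynomial.X * Polynomial.C ((A.mulVec w) k)) *
        ((1 - Polynomial.X) * Polynomial.C ((B'.mulVec v) l) +
          Polynomial.X * Polynomial.C ((B'.mulVec w) l)) -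
        ((1 - Polynomial.X) * Polynomial.C ((A.mulVec v) l) +
          Polynomial.X * Polynomial.C ((A.mulVec w) l)) *
        ((1 - Polynomial.X) * Polynomial.C ((B'.mulVec v) k) +
          Polynomial.X * Polynomial.C ((B'.mulVec w) k)) with hpq
      have heval : ∀ z : ℂ, pq.eval z =
          (A.mulVec ((1 - z) • v + z • w)) k * (B'.mulVec ((1 - z) • v + z • w)) l -
          (A.mulVec ((1 - z) • v + z • w)) l * (B'.mulVec ((1 - z) • v + z • w)) k := by
        intro z
        simp only [hpq, Polynomial.eval_sub, Polynomial.eval_mul, Polynomial.eval_add,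
          Polynomial.eval_one, Polynomial.eval_X, Polynomial.eval_C,
          Matrix.mulVec_add, Matrix.mulVec_smul, Pi.add_apply, Pi.smul_apply, smul_eq_mul]
        try ring
      have hp1 : pq.eval 1 ≠ 0 := by
        have hsimp : ((1:ℂ) - 1) • v + (1:ℂ) • w = w := by simp
        rw [heval 1, hsimp]
        exact sub_ne_zero.mpr hkl
      have hpne : pq ≠ 0 := fun h => hp1 (by rw [h]; simp)
      refine (Polynomial.finite_setOf_isRoot hpne).subset ?_
      intro z hz
      have hz' : projAct (↑a) (Projectivization.mk ℂ ((1 - z) • v + z • w) (hH0 z))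
          = projAct (↑b) (Projectivization.mk ℂ ((1 - z) • v + z • w) (hH0 z)) := hz
      have hmins := (agree_iff (↑a) (↑b) ((1 - z) • v + z • w) (hH0 z)).mp hz'
      show pq.IsRoot z
      rw [Polynomial.IsRoot, heval, sub_eq_zero]
      exact hmins k l
    set B : Set ℂ := ⋃ ab, Bset ab with hB
    have hBcount : B.Countable := countable_iUnion fun ab => (hBfin ab).countable
    have huncount : ∀ (c : ℂ) (ρ : ℝ), 0 < ρ → ∃ z ∈ Metric.ball c ρ, z ∉ B := by
      intro c ρ hρ
      by_contra h
      push_neg at h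
      have hsub : (fun t : ℝ => c + (t : ℂ)) '' (Set.Ioo 0 (ρ/2)) ⊆ B := by
        rintro _ ⟨t, ht, rfl⟩
        apply h
        rw [Metric.mem_ball, dist_eq_norm]
        have h1 : (c + (t : ℂ)) - c = ((t : ℝ) : ℂ) := by ring
        rw [h1, Complex.norm_real, Real.norm_eq_abs, abs_of_pos ht.1]
        linarith [ht.2]
      have hinj : Function.Injective (fun t : ℝ => c + (t : ℂ)) := by
        intro s t h'
        simp only [add_right_inj, Complex.ofReal_inj] at h'
        exact h'
      have h1 : ((fun t : ℝ => c + (t : ℂ)) '' (Set.Ioo 0 (ρ/2))).Countable := hBcount.mono hsub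
      have hcnt : (Set.Ioo (0:ℝ) (ρ/2)).Countable :=
        (h1.preimage hinj).mono (Set.subset_preimage_image _ _)
      have hlt : (0:ℝ) < ρ/2 := by linarith
      have hmkioo := Cardinal.mk_Ioo_real hlt
      have hle := hcnt.le_aleph0
      rw [hmkioo] at hle
      exact absurd hle Cardinal.aleph0_lt_continuum.not_ge
    have hpre1 : IsOpen (H ⁻¹' V₁) := hV₁o.preimage hHcont
    have h0mem : (0:ℂ) ∈ H ⁻¹' V₁ := by
      rw [Set.mem_preimage, hH0x]
      exact hx
    obtain ⟨ρ₀, hρ₀, hb₀⟩ := Metric.isOpen_iff.mp hpre1 0 h0mem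
    obtain ⟨z₀, hz₀ball, hz₀B⟩ := huncount 0 ρ₀ hρ₀
    have hz₀V : H z₀ ∈ V₁ := hb₀ hz₀ball
    have hpre0 : IsOpen (H ⁻¹' V₀) := hV₀o.preimage hHcont
    have h1mem : (1:ℂ) ∈ H ⁻¹' V₀ := by
      rw [Set.mem_preimage, hH1y]
      exact hyV₀
    obtain ⟨ρ₁, hρ₁, hb₁⟩ := Metric.isOpen_iff.mp hpre0 1 h1mem
    obtain ⟨z₁, hz₁ball, hz₁B⟩ := huncount 1 ρ₁ hρ₁
    have hz₁V : H z₁ ∈ V₀ := hb₁ hz₁ball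
    -- path in the complement of B
    have hpc : IsPathConnected (Bᶜ : Set ℂ) :=
      hBcount.isPathConnected_compl_of_one_lt_rank
        (by rw [Complex.rank_real_complex]; exact Cardinal.one_lt_two)
    have hjoin : JoinedIn (Bᶜ : Set ℂ) z₀ z₁ := hpc.joinedIn z₀ hz₀B z₁ hz₁B
    obtain ⟨σ, hσ⟩ := hjoin
    set G : Γ → Set ℝ := fun i => {t | f (H (σ.extend t)) = projAct ↑i (H (σ.extend t))} with hG
    have hGcl : ∀ i, IsClosed (G i) := fun i =>
      isClosed_eq (f.continuous.comp (hHcont.comp σ.continuous_extend))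
        ((continuous_projAct _).comp (hHcont.comp σ.continuous_extend))
    have hGcov : ∀ t : ℝ, ∃ i : Γ, t ∈ G i := by
      intro t
      obtain ⟨γ, hγ, hp⟩ := hf (H (σ.extend t))
      exact ⟨⟨γ, hγ⟩, hp⟩
    have hσmem : ∀ t : ℝ, σ.extend t ∉ B := by
      intro t
      have hrw : σ.extend t = σ (Set.projIcc 0 1 zero_le_one t) := rfl
      rw [hrw]
      exact hσ _
    have hGdis : ∀ i j : Γ, G i = G j ∨ G i ∩ G j = ∅ := by
      intro i j
      by_cases hij : projAct (↑i : Matrix.GeneralLinearGroup (Fin n) ℂ) = projAct ↑j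
      · left
        ext t
        show f _ = projAct ↑i _ ↔ f _ = projAct ↑j _
        rw [hij]
      · right
        ext t
        simp only [Set.mem_inter_iff, Set.mem_empty_iff_false, iff_false, not_and]
        intro h1 h2
        exfalso
        apply hσmem t
        refine mem_iUnion.mpr ⟨(i, j), ?_⟩
        show σ.extend t ∈ (if projAct (↑i : Matrix.GeneralLinearGroup (Fin n) ℂ) = projAct ↑j
          then ∅ else {z | projAct (↑i) (H z) = projAct (↑j) (H z)})
        rw [if_neg hij]
        have h1' : f (H (σ.extend t)) = projAct ↑i (H (σ.extend t)) := h1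
        have h2' : f (H (σ.extend t)) = projAct ↑j (H (σ.extend t)) := h2
        exact h1'.symm.trans h2'
    have hG1 : (0:ℝ) ∈ G i₁ := by
      show f (H (σ.extend 0)) = projAct ↑i₁ (H (σ.extend 0))
      rw [Path.extend_zero]
      exact hV₁E hz₀V
    have hG0 : (1:ℝ) ∈ G i₀ := by
      show f (H (σ.extend 1)) = projAct ↑i₀ (H (σ.extend 1))
      rw [Path.extend_one]
      exact hV₀E hz₁V
    have hGeq : G i₁ = G i₀ := sier G hGcl hGcov hGdis ⟨0, hG1⟩ ⟨1, hG0⟩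
    have h0i₀ : (0:ℝ) ∈ G i₀ := hGeq ▸ hG1
    have e2 : f (H (σ.extend 0)) = projAct ↑i₀ (H (σ.extend 0)) := h0i₀
    rw [Path.extend_zero] at e2
    have e1 : f (H z₀) = projAct ↑i₁ (H z₀) := hV₁E hz₀V
    have hcomp : projAct (↑i₁ : Matrix.GeneralLinearGroup (Fin n) ℂ) = projAct ↑i₀ := by
      by_contra hne
      apply hz₀B
      refine mem_iUnion.mpr ⟨(i₁, i₀), ?_⟩
      show z₀ ∈ (if projAct (↑i₁ : Matrix.GeneralLinearGroup (Fin n) ℂ) = projAct ↑i₀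
        then ∅ else {z | projAct (↑i₁) (H z) = projAct (↑i₀) (H z)})
      rw [if_neg hne]
      exact e1.symm.trans e2
    exact ⟨x, hV₁U hx, show f x = projAct ↑i₀ x from hcomp ▸ hV₁E hx⟩
  have hEq : E i₀ = Set.univ := by
    have hd : Dense (E i₀) := by
      rw [dense_iff_inter_open]
      intro U hU hne
      obtain ⟨q, hq⟩ := hdense U hU hne
      exact ⟨q, hq⟩
    rw [← (hEcl i₀).closure_eq]
    exact hd.closure_eq
  exact ⟨↑i₀, i₀.2, fun p => show p ∈ E i₀ from hEq ▸ Set.mem_univ p⟩
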